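/- Let (α_1, …, α_k) be a tuple of nonzero algebraic numbers satisfying Properties (P1) and (P2). Then for all 1 ≤ i, j ≤ k, if β is a Galois conjugate of α_i over ℚ, γ is a Galois conjugate of α_j over ℚ, and β/γ is a root of unity, then β = γ. -/

import Mathlib

open scoped BigOperators

noncomputable section

/-- The distance from a complex number to the nearest integer,
`‖x‖_ℤ = min {|x - m| : m ∈ ℤ}`. -/
noncomputable def distInt (x : ℂ) : ℝ := ⨅ m : ℤ, ‖x - m‖

/-- `x` is a root of unity. -/
def IsRootOfUnity {F : Type*} [Monoid F] (x : F) : Prop := ∃ n : ℕ, 0 < n ∧ x ^ n = 1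

/-- A sublinear function: a positive function `f : ℕ → ℝ` with `f n / n → 0`. -/
def Sublinear (f : ℕ → ℝ) : Prop :=
  (∀ n, 0 < f n) ∧ Filter.Tendsto (fun n => f n / (n : ℝ)) Filter.atTop (nhds 0)

/-- The absolute multiplicative Weil height of an algebraic number `x`:
`H(x)^d = c · ∏ max (1, |xᵢ|)` where `d` is the degree of the minimal polynomial of `x`
over `ℚ`, the `xᵢ` are its complex roots, and `c` is the smallest positive integer
clearing all denominators of its coefficients (the leading coefficient of the primitive
integral minimal polynomial). -/
noncomputable def mulHeight (x : AlgebraicClosure ℚ) : ℝ :=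
  (((sInf {c : ℕ | 0 < c ∧ ∀ i, ((c : ℚ) * (minpoly ℚ x).coeff i).den = 1} : ℕ) : ℝ) *
      (((minpoly ℚ x).map (algebraMap ℚ ℂ)).roots.map (fun z => max 1 ‖z‖)).prod) ^
    (((minpoly ℚ x).natDegree : ℝ)⁻¹)

/-- The absolute logarithmic Weil height. -/
noncomputable def logHeight (x : AlgebraicClosure ℚ) : ℝ := Real.log (mulHeight x)

/-- `y` is a Galois conjugate of `x` over `ℚ`. -/
def IsConjugate (x y : AlgebraicClosure ℚ) : Prop :=
  ∃ σ : AlgebraicClosure ℚ ≃ₐ[ℚ] AlgebraicClosure ℚ, σ x = y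

/-- A tuple `(β 0, …, β (k-1))` of (distinct, nonzero) algebraic numbers is pseudo-Pisot,
with respect to a fixed embedding `ι` of `ℚ̄` into `ℂ`, if letting `B` be the (finite) set of
Galois conjugates of the `β i` not belonging to `{β 0, …, β (k-1)}`, the sum of the `β i` and
of all elements of `B` is a rational integer and every element of `B` has modulus `< 1`. -/
def IsPseudoPisot (ι : AlgebraicClosure ℚ →+* ℂ) {k : ℕ} (β : Fin k → AlgebraicClosure ℚ) :
    Prop :=
  ∃ B : Finset (AlgebraicClosure ℚ),
    (↑B = {γ | γ ∉ Set.range β ∧ ∃ i, IsConjugate (β i) γ}) ∧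
    (∃ m : ℤ, (∑ i, β i) + (∑ γ ∈ B, γ) = (m : AlgebraicClosure ℚ)) ∧
    ∀ γ ∈ B, ‖ι γ‖ < 1

/-- A Pisot number: a real algebraic integer `> 1` all of whose other conjugates over `ℚ`
have modulus `< 1`. -/
def IsPisotNumber (x : ℝ) : Prop :=
  1 < x ∧ IsIntegral ℤ x ∧
    ∀ z : ℂ, ((minpoly ℚ x).map (algebraMap ℚ ℂ)).IsRoot z → z ≠ (x : ℂ) → ‖z‖ < 1

open NumberField IsDedekindDomain in
/-- The set of places of a number field `K`: infinite places together with the finite places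
(nonzero prime ideals of the ring of integers). -/
def Place (K : Type*) [Field K] [NumberField K] : Type _ :=
  InfinitePlace K ⊕ HeightOneSpectrum (𝓞 K)

open NumberField IsDedekindDomain in
open scoped Classical in
/-- The (unnormalized) `v`-adic absolute value `|x|_v = N(v)^{-ord_v x}`. -/
noncomputable def finPlaceAbs {K : Type*} [Field K] [NumberField K]
    (v : HeightOneSpectrum (𝓞 K)) (x : K) : ℝ :=
  if hx : x = 0 then 0
  else (Ideal.absNorm v.asIdeal : ℝ) ^
    (Multiplicative.toAdd (WithZero.unzero ((Valuation.ne_zero_iff (v.valuation K)).mpr hx)))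

open NumberField in
/-- The normalized absolute value `|·|_w` attached to a place `w` of `K`, normalized so that
`|x|_w = |Norm_{K_w/ℚ_v}(x)|_v^{1/[K:ℚ]}` and the product formula holds. -/
noncomputable def placeAbs {K : Type*} [Field K] [NumberField K] : Place K → K → ℝ
  | Sum.inl w => fun x => (w x) ^ ((w.mult : ℝ) / (Module.finrank ℚ K : ℝ))
  | Sum.inr v => fun x => (finPlaceAbs v x) ^ ((Module.finrank ℚ K : ℝ)⁻¹)

/-- The multiplicative projective height `H([x 0 : ⋯ : x m]) = ∏_w max_i |x i|_w`. -/
noncomputable def projHeight {K : Type*} [Field K] [NumberField K] {m : ℕ}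
    (x : Fin m → K) : ℝ :=
  ∏ᶠ w : Place K, ⨆ i, placeAbs w (x i)

/-- The multiplicative height of an element of a number field, `H(α) = H([α : 1])`. -/
noncomputable def mulHeightIn {K : Type*} [Field K] [NumberField K] (x : K) : ℝ :=
  projHeight ![x, 1]

/-- An `S`-unit: an element of `K^*` whose normalized absolute value is `1` at every place
outside `S`. -/
def IsSUnit {K : Type*} [Field K] [NumberField K] (S : Finset (Place K)) (x : K) : Prop :=
  x ≠ 0 ∧ ∀ p : Place K, p ∉ S → placeAbs p x = 1

/-- The image `σ(R)` of a rational function `R ∈ ℚ̄(x)` under `σ ∈ G_ℚ`, obtained by applying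
`σ` to the coefficients of the numerator and of the denominator of `R`. -/
noncomputable def ratFuncGal (σ : AlgebraicClosure ℚ ≃ₐ[ℚ] AlgebraicClosure ℚ)
    (R : RatFunc (AlgebraicClosure ℚ)) : RatFunc (AlgebraicClosure ℚ) :=
  algebraMap (Polynomial (AlgebraicClosure ℚ)) (RatFunc (AlgebraicClosure ℚ))
      (R.num.map (σ : AlgebraicClosure ℚ →+* AlgebraicClosure ℚ)) /
    algebraMap (Polynomial (AlgebraicClosure ℚ)) (RatFunc (AlgebraicClosure ℚ))
      (R.denom.map (σ : AlgebraicClosure ℚ →+* AlgebraicClosure ℚ))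

end

private lemma key_aux (a : AlgebraicClosure ℚ) (n : ℕ) (hn : 0 < n)
    (hdeg : (minpoly ℚ a).natDegree = (minpoly ℚ (a ^ n)).natDegree)
    (β γ : AlgebraicClosure ℚ) (hβ : IsConjugate a β) (hγ : IsConjugate a γ)
    (h : β ^ n = γ ^ n) : β = γ := by
  classical
  have : IsAlgClosure ℚ (AlgebraicClosure ℚ) := by
    convert AlgebraicClosure.instIsAlgClosure ℚ
    · rfl
    · exact Subsingleton.elim _ _
  have hint : ∀ x : AlgebraicClosure ℚ, IsIntegral ℚ x := fun x =>
    Algebra.IsIntegral.isIntegral x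
  have hmem : ∀ x : AlgebraicClosure ℚ, IsConjugate a x →
      x ∈ (minpoly ℚ a).rootSet (AlgebraicClosure ℚ) := by
    rintro x ⟨σ, rfl⟩
    rw [Polynomial.mem_rootSet]
    refine ⟨minpoly.ne_zero (hint a), ?_⟩
    rw [Polynomial.aeval_algEquiv]
    simp [minpoly.aeval]
  have hmemq : ∀ x : AlgebraicClosure ℚ, IsConjugate a x →
      x ^ n ∈ (minpoly ℚ (a ^ n)).rootSet (AlgebraicClosure ℚ) := by
    rintro x ⟨σ, rfl⟩
    rw [Polynomial.mem_rootSet]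
    refine ⟨minpoly.ne_zero (hint (a ^ n)), ?_⟩
    rw [← map_pow, Polynomial.aeval_algEquiv]
    simp [minpoly.aeval]
  set f : (minpoly ℚ a).rootSet (AlgebraicClosure ℚ) →
      (minpoly ℚ (a ^ n)).rootSet (AlgebraicClosure ℚ) := fun x => by
    have hx : IsConjugate a (x : AlgebraicClosure ℚ) := by
      obtain ⟨σ, hσ⟩ := minpoly.exists_algEquiv_of_root' (x := (x : AlgebraicClosure ℚ))
        ((hint a).isAlgebraic) (Polynomial.aeval_eq_zero_of_mem_rootSet x.2)
      exact ⟨σ, hσ⟩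
    exact ⟨(x : AlgebraicClosure ℚ) ^ n, hmemq _ hx⟩ with hf
  have hfval : ∀ x, ((f x : AlgebraicClosure ℚ)) = (x : AlgebraicClosure ℚ) ^ n :=
    fun x => rfl
  have hsurj : Function.Surjective f := by
    rintro ⟨y, hy⟩
    obtain ⟨σ, hσ⟩ := minpoly.exists_algEquiv_of_root' (y := a ^ n)
      ((hint (a ^ n)).isAlgebraic) (Polynomial.aeval_eq_zero_of_mem_rootSet hy)
    refine ⟨⟨σ a, hmem _ ⟨σ, rfl⟩⟩, ?_⟩
    apply Subtype.ext
    rw [hfval]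
    simpa [map_pow] using hσ
  have hcardp := Polynomial.card_rootSet_eq_natDegree (K := AlgebraicClosure ℚ)
    (Algebra.IsSeparable.isSeparable ℚ a) (IsAlgClosed.splits ((minpoly ℚ a).map (algebraMap ℚ (AlgebraicClosure ℚ))))
  have hcardq := Polynomial.card_rootSet_eq_natDegree (K := AlgebraicClosure ℚ)
    (Algebra.IsSeparable.isSeparable ℚ (a ^ n)) (IsAlgClosed.splits ((minpoly ℚ (a ^ n)).map (algebraMap ℚ (AlgebraicClosure ℚ))))
  have hbij : Function.Bijective f := by
    rw [Fintype.bijective_iff_surjective_and_card]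
    exact ⟨hsurj, by rw [hcardp, hcardq, hdeg]⟩
  have heq : f ⟨β, hmem β hβ⟩ = f ⟨γ, hmem γ hγ⟩ := by
    apply Subtype.ext
    rw [hfval, hfval]
    exact h
  have := hbij.injective heq
  exact congrArg Subtype.val (by injection this)

/-- **Lemma.** If `(α₁, …, α_k)` satisfies (P1) and (P2), then whenever `β` is a conjugate of
`αᵢ`, `γ` is a conjugate of `α_j`, and `β/γ` is a root of unity, one has `β = γ`. -/
theorem stmt16
    (k : ℕ) (α : Fin k → AlgebraicClosure ℚ) (hα0 : ∀ i, α i ≠ 0)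
    (hP1 : ∀ m : ℕ, 0 < m → ∀ i,
        (minpoly ℚ (α i)).natDegree = (minpoly ℚ (α i ^ m)).natDegree)
    (hP2 : ∀ i j : Fin k,
        (∃ σ : AlgebraicClosure ℚ ≃ₐ[ℚ] AlgebraicClosure ℚ, IsRootOfUnity (α i / σ (α j))) →
        IsConjugate (α i) (α j)) :
    ∀ (i j : Fin k) (β γ : AlgebraicClosure ℚ),
      IsConjugate (α i) β → IsConjugate (α j) γ → IsRootOfUnity (β / γ) → β = γ := by
  rintro i j β γ ⟨σ, rfl⟩ ⟨τ, rfl⟩ ⟨n, hn, hζ⟩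
  have hγ0 : τ (α j) ≠ 0 := by simpa using hα0 j
  have hpow : σ (α i) ^ n = τ (α j) ^ n := by
    field_simp at hζ
    exact (div_eq_one_iff_eq (pow_ne_zero _ hγ0)).mp (by simpa [div_pow] using hζ)
  have hconj : IsConjugate (α i) (α j) := by
    refine hP2 i j ⟨τ.trans σ.symm, n, hn, ?_⟩
    have : α i / (τ.trans σ.symm) (α j) = σ.symm (σ (α i) / τ (α j)) := by
      simp [map_div₀]
    rw [this, ← map_pow, hζ, map_one]
  obtain ⟨ρ, hρ⟩ := hconj
  exact key_aux (α i) n hn (hP1 n hn i) _ _ ⟨σ, rfl⟩ ⟨ρ.trans τ, by simp [hρ]⟩ hpow
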